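/- Let J ≥ 1 and let Y = {0,1}^J ∖ {0} be the set of nonempty bundles. Let F, G : ℝ^Y → ℝ be bounded Lebesgue-measurable functions, let β_0 ∈ ℝ and β_1 ≠ 0, let Z_2 ⊆ ℝ^J and let Z_1 ⊆ ℝ have nonempty interior. For y ∈ Y and z_2 ∈ ℝ^J write s(y, z_2) = Σ_{j=1}^J y_j z_{2,j}. Suppose that for every z_1 ∈ Z_1 and z_2 ∈ Z_2: ∫_ℝ F((−v·s(y,z_2))_{y∈Y}) φ(v − β_0 − β_1 z_1) dv = ∫_ℝ G((−v·s(y,z_2))_{y∈Y}) φ(v − β_0 − β_1 z_1) dv, where φ is the standard normal density. Then for every z_2 ∈ Z_2: F((−v·s(y,z_2))_{y∈Y}) = G((−v·s(y,z_2))_{y∈Y}) for Lebesgue-almost every v ∈ ℝ. -/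

import Mathlib

open MeasureTheory

/-- The standard normal density `φ(t) = (2π)^{-1/2} exp(-t²/2)`. -/
noncomputable def stdNormalPDF (t : ℝ) : ℝ :=
  (Real.sqrt (2 * Real.pi))⁻¹ * Real.exp (-t ^ 2 / 2)

/-- The set of nonempty bundles of `J` goods, `Y = {0,1}^J ∖ {0}`. -/
def Bundle (J : ℕ) : Type := {y : Fin J → Bool // y ≠ fun _ => false}

/-- `s(y, z₂) = ∑_{j=1}^J y_j z_{2,j}`, the total characteristic of bundle `y`. -/
def bundleSum {J : ℕ} (y : Fin J → Bool) (z₂ : Fin J → ℝ) : ℝ :=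
  ∑ j : Fin J, if y j then z₂ j else 0

open Complex FourierTransform Filter Metric
open scoped Real Topology SchwartzMap ContDiff

/-- A smooth compactly supported real function, as a complex-valued Schwartz map. -/
noncomputable def hcsToSchwartz (g : ℝ → ℝ) (hg : ContDiff ℝ ∞ g)
    (hsupp : HasCompactSupport g) : SchwartzMap ℝ ℂ where
  toFun x := (g x : ℂ)
  smooth' := Complex.ofRealCLM.contDiff.comp hg
  decay' := by
    intro k n
    have hgC : ContDiff ℝ ∞ (fun x : ℝ => (g x : ℂ)) := Complex.ofRealCLM.contDiff.comp hg
    have hsC : HasCompactSupport (fun x : ℝ => (g x : ℂ)) :=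
      hsupp.comp_left (g := fun r : ℝ => (r : ℂ)) (by simp)
    have h1 : Continuous fun x : ℝ =>
        ‖x‖ ^ k * ‖iteratedFDeriv ℝ n (fun x : ℝ => (g x : ℂ)) x‖ := by
      exact ((continuous_norm.pow k)).mul
        ((hgC.continuous_iteratedFDeriv (by exact_mod_cast le_top)).norm)
    have h2 : HasCompactSupport fun x : ℝ =>
        ‖x‖ ^ k * ‖iteratedFDeriv ℝ n (fun x : ℝ => (g x : ℂ)) x‖ :=
      ((hsC.iteratedFDeriv n).norm).mul_left
    obtain ⟨C, hC⟩ := h1.bounded_above_of_compact_support h2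
    exact ⟨C, fun x => (le_abs_self _).trans ((Real.norm_eq_abs _ ▸ hC x))⟩

/-- Fourier injectivity on L¹(ℝ): an integrable function whose Fourier transform vanishes
is a.e. zero. -/
lemma ae_zero_of_fourierIntegral_zero {k : ℝ → ℂ} (hk : Integrable k)
    (h : ∀ ξ : ℝ, 𝓕 k ξ = 0) : ∀ᵐ v : ℝ ∂volume, k v = 0 := by
  apply ae_eq_zero_of_integral_contDiff_smul_eq_zero hk.locallyIntegrable
  intro g hg hgsupp
  set gS : SchwartzMap ℝ ℂ := hcsToSchwartz g hg hgsupp with hgS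
  set φ : SchwartzMap ℝ ℂ := (SchwartzMap.fourierTransformCLE ℂ (SchwartzMap ℝ ℂ)).symm gS with hφ
  have hφF : 𝓕 ⇑φ = ⇑gS := by
    have := (SchwartzMap.fourierTransformCLE ℂ (SchwartzMap ℝ ℂ)).apply_symm_apply gS
    calc 𝓕 ⇑φ = ⇑(SchwartzMap.fourierTransformCLE ℂ (SchwartzMap ℝ ℂ) φ) := by
          rfl
      _ = ⇑gS := by rw [this]
  have flip := VectorFourier.integral_fourierIntegral_smul_eq_flip
    (L := innerₗ ℝ) (μ := (volume : Measure ℝ)) (ν := (volume : Measure ℝ))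
    Real.continuous_fourierChar continuous_inner hk φ.integrable
  have hflipL : (innerₗ ℝ).flip = innerₗ ℝ := by
    apply LinearMap.ext; intro x; apply LinearMap.ext; intro y
    simp [real_inner_comm]
  rw [hflipL] at flip
  have h0 : (∫ ξ : ℝ, (VectorFourier.fourierIntegral 𝐞 volume (innerₗ ℝ) k ξ) • (φ ξ)) = 0 := by
    have : ∀ ξ : ℝ, VectorFourier.fourierIntegral 𝐞 volume (innerₗ ℝ) k ξ = 0 := h
    simp [this]
  rw [h0] at flip
  have : (∫ x : ℝ, k x • (𝓕 ⇑φ) x) = 0 := by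
    rw [show (𝓕 ⇑φ) = VectorFourier.fourierIntegral 𝐞 volume (innerₗ ℝ) ⇑φ from rfl]
    exact flip.symm
  rw [hφF] at this
  calc (∫ x : ℝ, g x • k x) = ∫ x : ℝ, k x • gS x := by
        congr 1; funext x
        show g x • k x = k x * (g x : ℂ)
        rw [Complex.real_smul, mul_comm]
    _ = 0 := this

lemma exp_quad_bound (R a : ℝ) (hR : 0 ≤ R) :
    Real.exp (-a ^ 2 / 2 + R * |a|) ≤ Real.exp (R ^ 2) * Real.exp (-(1/4) * a ^ 2) := by
  rw [← Real.exp_add]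
  apply Real.exp_le_exp.2
  nlinarith [sq_nonneg (R - |a| / 2), _root_.sq_abs a, abs_nonneg a]

lemma laplace_zero_everywhere
    {h : ℝ → ℝ} (hm : Measurable h) {C : ℝ} (hb : ∀ v, |h v| ≤ C)
    {U : Set ℝ} (hU : IsOpen U) (hne : U.Nonempty)
    (hz : ∀ c ∈ U, (∫ v : ℝ, (h v : ℂ) * Complex.exp (((-v ^ 2 / 2 : ℝ) : ℂ) + (c : ℂ) * v)) = 0) :
    ∀ s : ℂ, (∫ v : ℝ, (h v : ℂ) * Complex.exp (((-v ^ 2 / 2 : ℝ) : ℂ) + s * v)) = 0 := by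
  have hC : 0 ≤ C := (abs_nonneg _).trans (hb 0)
  set L : ℂ → ℂ := fun s => ∫ v : ℝ, (h v : ℂ) * Complex.exp (((-v ^ 2 / 2 : ℝ) : ℂ) + s * v) with hL
  -- pointwise norm computation
  have hnorm : ∀ (x : ℂ) (a : ℝ),
      ‖(h a : ℂ) * Complex.exp (((-a ^ 2 / 2 : ℝ) : ℂ) + x * a)‖
        = |h a| * Real.exp (-a ^ 2 / 2 + x.re * a) := by
    intro x a
    rw [norm_mul, Complex.norm_exp]
    congr 1
    · simp
    · simp [Complex.add_re, Complex.mul_re, ← Complex.ofReal_pow]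
  have hmeas : ∀ x : ℂ, AEStronglyMeasurable
      (fun a : ℝ => (h a : ℂ) * Complex.exp (((-a ^ 2 / 2 : ℝ) : ℂ) + x * a)) volume := by
    intro x
    apply Measurable.aestronglyMeasurable
    apply (Complex.measurable_ofReal.comp hm).mul
    apply Complex.measurable_exp.comp
    fun_prop
  -- L is differentiable everywhere
  have hdiff : Differentiable ℂ L := by
    intro x₀
    set R : ℝ := ‖x₀‖ + 2 with hR
    have hR0 : 0 ≤ R := by positivity
    set bound : ℝ → ℝ := fun a => C * (Real.exp (R ^ 2) * Real.exp (-(1/4) * a ^ 2)) with hbd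
    have bound_int : Integrable bound volume := by
      exact ((integrable_exp_neg_mul_sq (by norm_num : (0:ℝ) < 1/4)).const_mul _).const_mul C
    have key : ∀ (x : ℂ) (a : ℝ), ‖x‖ + 1 ≤ R →
        ‖(h a : ℂ) * (Complex.exp (((-a ^ 2 / 2 : ℝ) : ℂ) + x * a) * a)‖ ≤ bound a := by
      intro x a hx
      rw [norm_mul, norm_mul]
      have h1 : ‖(h a : ℂ)‖ = |h a| := by simp
      have h2 : ‖Complex.exp (((-a ^ 2 / 2 : ℝ) : ℂ) + x * a)‖ = Real.exp (-a ^ 2 / 2 + x.re * a) := by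
        have := hnorm x a
        rw [norm_mul, h1] at this
        rcases eq_or_lt_of_le (abs_nonneg (h a)) with h0 | h0
        · rw [Complex.norm_exp]
          congr 1
          simp [Complex.add_re, Complex.mul_re, ← Complex.ofReal_pow]
        · exact mul_left_cancel₀ (ne_of_gt h0) this
      rw [h1, h2]
      have e1 : Real.exp (-a ^ 2 / 2 + x.re * a) * ‖(a : ℂ)‖
          ≤ Real.exp (-a ^ 2 / 2 + R * |a|) := by
        have hre : x.re * a ≤ (‖x‖) * |a| := by
          calc x.re * a ≤ |x.re * a| := le_abs_self _
            _ = |x.re| * |a| := abs_mul _ _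
            _ ≤ ‖x‖ * |a| := by
                apply mul_le_mul_of_nonneg_right _ (abs_nonneg a)
                exact Complex.abs_re_le_norm x
        have haexp : ‖(a : ℂ)‖ ≤ Real.exp |a| := by
          rw [Complex.norm_real, Real.norm_eq_abs]
          linarith [Real.add_one_le_exp |a|]
        calc Real.exp (-a ^ 2 / 2 + x.re * a) * ‖(a : ℂ)‖
            ≤ Real.exp (-a ^ 2 / 2 + ‖x‖ * |a|) * Real.exp |a| := by
              apply mul_le_mul _ haexp (norm_nonneg _) (Real.exp_pos _).le
              exact Real.exp_le_exp.2 (by linarith)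
          _ = Real.exp (-a ^ 2 / 2 + (‖x‖ + 1) * |a|) := by
              rw [← Real.exp_add]; ring_nf
          _ ≤ Real.exp (-a ^ 2 / 2 + R * |a|) := by
              apply Real.exp_le_exp.2
              have := abs_nonneg a
              nlinarith
      calc |h a| * (Real.exp (-a ^ 2 / 2 + x.re * a) * ‖(a : ℂ)‖)
          ≤ C * Real.exp (-a ^ 2 / 2 + R * |a|) := by
            apply mul_le_mul (hb a) e1 (by positivity) hC
        _ ≤ bound a := by
            rw [hbd]
            exact mul_le_mul_of_nonneg_left (exp_quad_bound R a hR0) hC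
    have main := hasDerivAt_integral_of_dominated_loc_of_deriv_le
      (F := fun (x : ℂ) (a : ℝ) => (h a : ℂ) * Complex.exp (((-a ^ 2 / 2 : ℝ) : ℂ) + x * a))
      (F' := fun (x : ℂ) (a : ℝ) => (h a : ℂ) * (Complex.exp (((-a ^ 2 / 2 : ℝ) : ℂ) + x * a) * a))
      (x₀ := x₀) (bound := bound) (μ := volume) (s := Metric.ball x₀ 1) (Metric.ball_mem_nhds x₀ one_pos)
      (Eventually.of_forall fun x => hmeas x)
      ?hFint ?hF'meas ?hbound bound_int ?hderiv
    · exact main.2.differentiableAt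
    case hFint =>
      apply Integrable.mono' bound_int (hmeas x₀)
      filter_upwards with a
      rw [hnorm x₀ a]
      have h2 : Real.exp (-a ^ 2 / 2 + x₀.re * a) ≤ Real.exp (-a ^ 2 / 2 + R * |a|) := by
        apply Real.exp_le_exp.2
        have hre : x₀.re * a ≤ ‖x₀‖ * |a| := by
          calc x₀.re * a ≤ |x₀.re * a| := le_abs_self _
            _ = |x₀.re| * |a| := abs_mul _ _
            _ ≤ ‖x₀‖ * |a| := mul_le_mul_of_nonneg_right (Complex.abs_re_le_norm x₀) (abs_nonneg a)
        nlinarith [abs_nonneg a]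
      calc |h a| * Real.exp (-a ^ 2 / 2 + x₀.re * a)
          ≤ C * Real.exp (-a ^ 2 / 2 + R * |a|) :=
            mul_le_mul (hb a) h2 (Real.exp_pos _).le hC
        _ ≤ bound a := mul_le_mul_of_nonneg_left (exp_quad_bound R a hR0) hC
    case hF'meas =>
      apply Measurable.aestronglyMeasurable
      apply (Complex.measurable_ofReal.comp hm).mul
      apply Measurable.mul _ Complex.measurable_ofReal
      apply Complex.measurable_exp.comp
      fun_prop
    case hbound =>
      filter_upwards with a x hx
      apply key x a
      have : ‖x - x₀‖ < 1 := mem_ball_iff_norm.mp hx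
      calc ‖x‖ + 1 = ‖x₀ + (x - x₀)‖ + 1 := by ring_nf
        _ ≤ ‖x₀‖ + ‖x - x₀‖ + 1 := by linarith [norm_add_le x₀ (x - x₀)]
        _ ≤ R := by rw [hR]; linarith
    case hderiv =>
      filter_upwards with a x _
      have h1 : HasDerivAt (fun x : ℂ => (((-a ^ 2 / 2 : ℝ) : ℂ) : ℂ) + x * a) (a : ℂ) x :=
        ((hasDerivAt_id x).mul_const (a : ℂ)).const_add _ |>.congr_deriv (by simp)
      exact (h1.cexp).const_mul ((h a : ℂ))
  -- identity theorem
  have hana : AnalyticOnNhd ℂ L Set.univ := fun z _ => hdiff.analyticAt z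
  obtain ⟨c₀, hc₀⟩ := hne
  obtain ⟨ε, hε, hball⟩ := Metric.isOpen_iff.1 hU c₀ hc₀
  set u : ℕ → ℝ := fun n => c₀ + (ε / 2) * (1 / ((n : ℝ) + 1)) with hu
  have humem : ∀ n, u n ∈ U := by
    intro n
    apply hball
    rw [mem_ball, hu]
    have h1 : (0:ℝ) < 1 / ((n : ℝ) + 1) := by positivity
    have h2 : 1 / ((n : ℝ) + 1) ≤ 1 := by
      rw [div_le_one (by positivity)]; linarith [Nat.cast_nonneg (α := ℝ) n]
    rw [Real.dist_eq]
    rw [show c₀ + ε / 2 * (1 / ((n:ℝ) + 1)) - c₀ = ε / 2 * (1 / ((n:ℝ) + 1)) by ring]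
    rw [abs_of_pos (by positivity)]
    nlinarith
  have htendR : Tendsto u atTop (𝓝 c₀) := by
    have A : Tendsto (fun n : ℕ => ((n : ℝ) + 1)) atTop atTop :=
      tendsto_atTop_add_const_right _ 1 tendsto_natCast_atTop_atTop
    have B : Tendsto (fun n : ℕ => ε / 2 * ((n : ℝ) + 1)⁻¹) atTop (𝓝 (ε / 2 * 0)) :=
      (A.inv_tendsto_atTop).const_mul (ε / 2)
    have C : Tendsto (fun n : ℕ => c₀ + ε / 2 * ((n : ℝ) + 1)⁻¹) atTop (𝓝 (c₀ + ε / 2 * 0)) :=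
      tendsto_const_nhds.add B
    simpa [hu, one_div] using C
  have hune : ∀ n : ℕ, u n ≠ c₀ := by
    intro n
    rw [hu]
    have h1 : (0:ℝ) < (ε / 2) * (1 / ((n : ℝ) + 1)) := by positivity
    intro hcon
    nlinarith [hcon]
  have htend : Tendsto (fun n : ℕ => ((u n : ℝ) : ℂ)) atTop (𝓝[≠] (c₀ : ℂ)) := by
    rw [tendsto_nhdsWithin_iff]
    refine ⟨(Complex.continuous_ofReal.tendsto c₀).comp htendR, ?_⟩
    filter_upwards with n
    simpa using Complex.ofReal_injective.ne (hune n)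
  have hfreq : ∃ᶠ z in 𝓝[≠] (c₀ : ℂ), L z = 0 :=
    htend.frequently (Frequently.of_forall fun n => hz (u n) (humem n))
  intro s
  exact hana.eqOn_zero_of_preconnected_of_frequently_eq_zero isPreconnected_univ
    (Set.mem_univ _) hfreq (Set.mem_univ s)

/-- core of Proposition 4(ii), bundles model: once the index
coefficients are identified, variation in the Gaussian index identifies the
joint structural function of the bundle-specific shocks along the directions
generated by the characteristics `z₂ ∈ Z₂`. -/
theorem bundles_identification_along_rays
    {J : ℕ} (hJ : 1 ≤ J)
    (F G : (Bundle J → ℝ) → ℝ) (hFm : Measurable F) (hGm : Measurable G)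
    (hFb : ∃ C : ℝ, ∀ g, |F g| ≤ C) (hGb : ∃ C : ℝ, ∀ g, |G g| ≤ C)
    (β₀ β₁ : ℝ) (hβ₁ : β₁ ≠ 0)
    (Z₂ : Set (Fin J → ℝ)) (Z₁ : Set ℝ) (hZ₁ : (interior Z₁).Nonempty)
    (heq : ∀ z₁ ∈ Z₁, ∀ z₂ ∈ Z₂,
      ∫ v : ℝ, F (fun y : Bundle J => -v * bundleSum y.1 z₂) *
          stdNormalPDF (v - β₀ - β₁ * z₁) =
        ∫ v : ℝ, G (fun y : Bundle J => -v * bundleSum y.1 z₂) *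
          stdNormalPDF (v - β₀ - β₁ * z₁)) :
    ∀ z₂ ∈ Z₂, ∀ᵐ v : ℝ ∂volume,
      F (fun y : Bundle J => -v * bundleSum y.1 z₂) =
        G (fun y : Bundle J => -v * bundleSum y.1 z₂) := by
  obtain ⟨CF, hCF⟩ := hFb
  obtain ⟨CG, hCG⟩ := hGb
  intro z₂ hz₂
  set A : ℝ → (Bundle J → ℝ) := fun v => fun y => -v * bundleSum y.1 z₂ with hA
  have mA : Measurable A := measurable_pi_lambda _ (fun y => (measurable_id.neg).mul_const _)
  set h : ℝ → ℝ := fun v => F (A v) - G (A v) with hhdef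
  have hmh : Measurable h := (hFm.comp mA).sub (hGm.comp mA)
  have hbh : ∀ v, |h v| ≤ CF + CG :=
    fun v => (abs_sub _ _).trans (add_le_add (hCF _) (hCG _))
  -- Gaussian integrability
  have gauss_int : ∀ c : ℝ, Integrable (fun v : ℝ => Real.exp (-(v - c) ^ 2 / 2)) volume := by
    intro c
    have h1 := (integrable_exp_neg_mul_sq (by norm_num : (0:ℝ) < 1/2)).comp_sub_right c
    have h2 : (fun v : ℝ => Real.exp (-(v - c) ^ 2 / 2))
        = fun v : ℝ => Real.exp (-(1/2) * (v - c) ^ 2) := by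
      funext v; congr 1; ring
    rw [h2]; exact h1
  -- Step 1: real Gaussian integrals of h vanish on Z₁
  have step1 : ∀ z₁ ∈ Z₁,
      (∫ v : ℝ, h v * Real.exp (-(v - (β₀ + β₁ * z₁)) ^ 2 / 2)) = 0 := by
    intro z₁ hz₁
    set c : ℝ := β₀ + β₁ * z₁ with hc
    have hFi : Integrable (fun v : ℝ => F (A v) * Real.exp (-(v - c) ^ 2 / 2)) volume :=
      (gauss_int c).bdd_mul (hFm.comp mA).aestronglyMeasurable
        (ae_of_all _ fun v => by rw [Real.norm_eq_abs]; exact hCF _)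
    have hGi : Integrable (fun v : ℝ => G (A v) * Real.exp (-(v - c) ^ 2 / 2)) volume :=
      (gauss_int c).bdd_mul (hGm.comp mA).aestronglyMeasurable
        (ae_of_all _ fun v => by rw [Real.norm_eq_abs]; exact hCG _)
    have hexp : ∀ v : ℝ, stdNormalPDF (v - β₀ - β₁ * z₁)
        = (Real.sqrt (2 * Real.pi))⁻¹ * Real.exp (-(v - c) ^ 2 / 2) := by
      intro v
      rw [stdNormalPDF]
      congr 2
      ring
    have key := heq z₁ hz₁ z₂ hz₂
    have e1 : (∫ v : ℝ, F (A v) * stdNormalPDF (v - β₀ - β₁ * z₁))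
        = (Real.sqrt (2 * Real.pi))⁻¹ * ∫ v : ℝ, F (A v) * Real.exp (-(v - c) ^ 2 / 2) := by
      rw [← integral_const_mul]
      congr 1; funext v; rw [hexp v]; ring
    have e2 : (∫ v : ℝ, G (A v) * stdNormalPDF (v - β₀ - β₁ * z₁))
        = (Real.sqrt (2 * Real.pi))⁻¹ * ∫ v : ℝ, G (A v) * Real.exp (-(v - c) ^ 2 / 2) := by
      rw [← integral_const_mul]
      congr 1; funext v; rw [hexp v]; ring
    have hsqrt : (Real.sqrt (2 * Real.pi))⁻¹ ≠ 0 := by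
      have : (0:ℝ) < Real.sqrt (2 * Real.pi) := Real.sqrt_pos.2 (by positivity)
      positivity
    rw [e1, e2] at key
    have e3 := mul_left_cancel₀ hsqrt key
    have e4 : (fun v : ℝ => h v * Real.exp (-(v - c) ^ 2 / 2))
        = fun v : ℝ => F (A v) * Real.exp (-(v - c) ^ 2 / 2)
            - G (A v) * Real.exp (-(v - c) ^ 2 / 2) := by
      funext v; rw [hhdef]; ring
    rw [e4, integral_sub hFi hGi, e3, sub_self]
  -- Step 2: the complex Laplace transform vanishes on an open set
  set Uset : Set ℝ := (fun t : ℝ => β₀ + β₁ * t) '' interior Z₁ with hUdef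
  have hopen : IsOpen Uset := by
    have h1 : IsOpenMap fun t : ℝ => β₁ * t := (Homeomorph.mulLeft₀ β₁ hβ₁).isOpenMap
    have h2 : IsOpenMap fun t : ℝ => β₀ + t := (Homeomorph.addLeft β₀).isOpenMap
    have h3 : IsOpenMap (fun t : ℝ => β₀ + β₁ * t) := by
      have := h2.comp h1
      exact this
    exact h3 _ isOpen_interior
  have hne : Uset.Nonempty := hZ₁.image _
  have step2 : ∀ c ∈ Uset,
      (∫ v : ℝ, (h v : ℂ) * Complex.exp (((-v ^ 2 / 2 : ℝ) : ℂ) + (c : ℂ) * v)) = 0 := by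
    rintro c ⟨z₁, hz₁, rfl⟩
    set c : ℝ := β₀ + β₁ * z₁ with hc
    have hsplit : (fun v : ℝ => h v * Real.exp (-(v - c) ^ 2 / 2))
        = fun v : ℝ => (h v * Real.exp (-v ^ 2 / 2 + c * v)) * Real.exp (-c ^ 2 / 2) := by
      funext v
      rw [mul_assoc, ← Real.exp_add]
      congr 2
      ring
    have h1 := step1 z₁ (interior_subset hz₁)
    rw [hsplit, integral_mul_const] at h1
    have hreal : (∫ v : ℝ, h v * Real.exp (-v ^ 2 / 2 + c * v)) = 0 :=
      (mul_eq_zero.mp h1).resolve_right (Real.exp_ne_zero _)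
    calc (∫ v : ℝ, (h v : ℂ) * Complex.exp (((-v ^ 2 / 2 : ℝ) : ℂ) + (c : ℂ) * v))
        = ∫ v : ℝ, ((h v * Real.exp (-v ^ 2 / 2 + c * v) : ℝ) : ℂ) := by
          congr 1; funext v
          rw [Complex.ofReal_mul, Complex.ofReal_exp]
          congr 2
          push_cast
          ring
      _ = ((∫ v : ℝ, h v * Real.exp (-v ^ 2 / 2 + c * v) : ℝ) : ℂ) := integral_ofReal
      _ = 0 := by rw [hreal, Complex.ofReal_zero]
  have hLall := laplace_zero_everywhere hmh hbh hopen hne step2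
  -- Step 3: the Fourier transform of k vanishes
  set k : ℝ → ℂ := fun v => (h v : ℂ) * ((Real.exp (-v ^ 2 / 2) : ℝ) : ℂ) with hkdef
  have gauss0 : Integrable (fun v : ℝ => Real.exp (-v ^ 2 / 2)) volume := by
    have := gauss_int 0
    simpa using this
  have hk_int : Integrable k volume := by
    apply (gauss0.ofReal (𝕜 := ℂ)).bdd_mul
      ((Complex.measurable_ofReal.comp hmh).aestronglyMeasurable)
    exact ae_of_all _ fun v => by
      simpa [Function.comp, Complex.norm_real, Real.norm_eq_abs] using hbh v
  have hFour : ∀ ξ : ℝ, 𝓕 k ξ = 0 := by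
    intro ξ
    rw [Real.fourier_real_eq_integral_exp_smul]
    have hpt : ∀ v : ℝ, Complex.exp (((-2 * Real.pi * v * ξ : ℝ) : ℂ) * Complex.I) • k v
        = (h v : ℂ) * Complex.exp (((-v ^ 2 / 2 : ℝ) : ℂ)
            + (((-2 * Real.pi * ξ : ℝ) : ℂ) * Complex.I) * v) := by
      intro v
      rw [smul_eq_mul]
      show Complex.exp (((-2 * Real.pi * v * ξ : ℝ) : ℂ) * Complex.I)
          * ((h v : ℂ) * ((Real.exp (-v ^ 2 / 2) : ℝ) : ℂ)) = _
      rw [Complex.ofReal_exp, Complex.exp_add]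
      rw [show (((-2 * Real.pi * v * ξ : ℝ) : ℂ) * Complex.I)
          = (((-2 * Real.pi * ξ : ℝ) : ℂ) * Complex.I) * v by push_cast; ring]
      ring
    simp_rw [hpt]
    exact hLall _
  have hae := ae_zero_of_fourierIntegral_zero hk_int hFour
  filter_upwards [hae] with v hv
  have h1 : (h v : ℂ) = 0 := by
    have hne : ((Real.exp (-v ^ 2 / 2) : ℝ) : ℂ) ≠ 0 := by
      simpa using Real.exp_ne_zero (-v ^ 2 / 2)
    exact (mul_eq_zero.mp hv).resolve_right hne
  have h2 : h v = 0 := by exact_mod_cast h1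
  have h3 : F (A v) - G (A v) = 0 := h2
  linarith [h3]
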